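/- Let u be a sequence over a finite alphabet, w a word, and c a letter such that wc is a left special factor of u. Then T(w) ≥ 2; moreover, T(w) = 2 if and only if there exist two distinct letters a, b such that {awc, bwc} ⊆ Bext(w) ∪ Bext(w̄) ⊆ {awc, bwc, cw̄a, cw̄b}. -/
import Mathlib


namespace ReflPaper

variable {A : Type*}

/-- The factor of `u` of length `n` at position `i`: `u(i) u(i+1) ⋯ u(i+n-1)`. -/
def factorAt (u : ℕ → A) (n i : ℕ) : List A :=
  (List.range n).map (fun k => u (i + k))

/-- The word `w` occurs in the sequence `u` at position `i`. -/
def OccursAt (u : ℕ → A) (w : List A) (i : ℕ) : Prop :=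
  w = factorAt u w.length i

/-- The language of `u`: the set of all factors of `u`. -/
def Lang (u : ℕ → A) : Set (List A) := {w | ∃ i, OccursAt u w i}

/-- The set of factors of `u` of length `n`. -/
def LangN (u : ℕ → A) (n : ℕ) : Set (List A) := {w | w.length = n ∧ w ∈ Lang u}

/-- The word `w` occurs infinitely many times in `u`. -/
def OccursInf (u : ℕ → A) (w : List A) : Prop := {i | OccursAt u w i}.Infinite

/-- `u` is eventually periodic. -/
def EventuallyPeriodic (u : ℕ → A) : Prop :=
  ∃ N p : ℕ, 1 ≤ p ∧ ∀ i, N ≤ i → u (i + p) = u i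

/-- Two words are reflectively equivalent if one equals the other or its reversal. -/
def ReflEquiv (w v : List A) : Prop := w = v ∨ w = v.reverse

/-- Reflective equivalence as a setoid on words. -/
def reflSetoid (A : Type*) : Setoid (List A) where
  r := ReflEquiv
  iseqv := by
    constructor
    · intro w; exact Or.inl rfl
    · intro w v h
      rcases h with h | h
      · exact Or.inl h.symm
      · subst h; simp [ReflEquiv]
    · intro w v x h1 h2
      rcases h1 with h1 | h1 <;> rcases h2 with h2 | h2 <;> subst h1 <;>
        simp [ReflEquiv, h2]

/-- The number of reflective-equivalence classes of words in a set `S`. -/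
noncomputable def nClasses (S : Set (List A)) : ℕ :=
  Set.ncard (Quotient.mk (reflSetoid A) '' S)

/-- The reflection complexity `r_u(n)`. -/
noncomputable def reflComplexity (u : ℕ → A) (n : ℕ) : ℕ := nClasses (LangN u n)

/-- The factor complexity `C_u(n) = #L_n(u)`. -/
noncomputable def factorComplexity (u : ℕ → A) (n : ℕ) : ℕ := (LangN u n).ncard

/-- The palindromic complexity `P_u(n)`. -/
noncomputable def palComplexity (u : ℕ → A) (n : ℕ) : ℕ :=
  Set.ncard {w ∈ LangN u n | w.reverse = w}

/-- Both-sided extensions of `w` in the language of `u`. -/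
def Bext (u : ℕ → A) (w : List A) : Set (List A) :=
  {x ∈ Lang u | ∃ a b : A, x = a :: (w ++ [b])}

/-- Right extensions of `w` in the language of `u`. -/
def Rext (u : ℕ → A) (w : List A) : Set (List A) :=
  {x ∈ Lang u | ∃ a : A, x = w ++ [a]}

/-- `T(w)`: the number of reflective-equivalence classes of `Bext(w) ∪ Bext(w̄)`. -/
noncomputable def TT (u : ℕ → A) (w : List A) : ℕ :=
  nClasses (Bext u w ∪ Bext u w.reverse)

/-- `w` is a right special factor of `u`. -/
def RightSpecial (u : ℕ → A) (w : List A) : Prop :=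
  ∃ a b : A, a ≠ b ∧ w ++ [a] ∈ Lang u ∧ w ++ [b] ∈ Lang u

/-- `w` is a left special factor of `u`. -/
def LeftSpecial (u : ℕ → A) (w : List A) : Prop :=
  ∃ a b : A, a ≠ b ∧ a :: w ∈ Lang u ∧ b :: w ∈ Lang u

/-- `u` is Sturmian: `C_u(n) = n + 1` for all `n`. -/
def Sturmian (u : ℕ → A) : Prop := ∀ n, factorComplexity u n = n + 1

/-- `u` is quasi-Sturmian: `C_u(n) = n + c` eventually. -/
def QuasiSturmian (u : ℕ → A) : Prop :=
  ∃ n₀ c : ℕ, ∀ n, n₀ ≤ n → factorComplexity u n = n + c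


lemma bext_subset (u : ℕ → A) (w : List A) :
    Bext u w ⊆ Set.range (fun p : A × A => p.1 :: (w ++ [p.2])) := by
  rintro x ⟨-, a, b, rfl⟩
  exact ⟨(a, b), rfl⟩

lemma bext_finite [Finite A] (u : ℕ → A) (w : List A) : (Bext u w).Finite :=
  (Set.finite_range _).subset (bext_subset u w)

lemma cls_ne {a b c : A} {w : List A} (hab : a ≠ b) :
    Quotient.mk (reflSetoid A) (a :: (w ++ [c])) ≠
    Quotient.mk (reflSetoid A) (b :: (w ++ [c])) := by
  intro h
  rcases Quotient.exact h with h1 | h1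
  · exact hab (List.head_eq_of_cons_eq h1)
  · rw [List.reverse_cons, List.reverse_append, List.reverse_singleton,
      List.singleton_append] at h1
    obtain ⟨hac, h2⟩ := List.cons_eq_cons.mp h1
    obtain ⟨-, h3⟩ := List.append_inj' h2 rfl
    exact hab (hac.trans (List.singleton_injective h3))

lemma cls_rev (x : List A) :
    Quotient.mk (reflSetoid A) x.reverse = Quotient.mk (reflSetoid A) x :=
  Quotient.sound (Or.inr rfl)

lemma rev_cons_eq (w : List A) (a c : A) :
    (a :: (w ++ [c])).reverse = c :: (w.reverse ++ [a]) := by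
  simp

/-- if `wc` is left special then `T(w) ≥ 2`, with equality iff the
bidirectional extensions are squeezed between the two indicated sets. -/
theorem stmt4 {A : Type*} [Fintype A] (u : ℕ → A) (w : List A) (c : A)
    (h : LeftSpecial u (w ++ [c])) :
    2 ≤ TT u w ∧
    (TT u w = 2 ↔ ∃ a b : A, a ≠ b ∧
      {a :: (w ++ [c]), b :: (w ++ [c])} ⊆ Bext u w ∪ Bext u w.reverse ∧
      Bext u w ∪ Bext u w.reverse ⊆
        {a :: (w ++ [c]), b :: (w ++ [c]),
         c :: (w.reverse ++ [a]), c :: (w.reverse ++ [b])}) := by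
  classical
  obtain ⟨a₀, b₀, hab₀, ha₀, hb₀⟩ := h
  set q : List A → Quotient (reflSetoid A) := Quotient.mk (reflSetoid A) with hq
  set S := Bext u w ∪ Bext u w.reverse with hS
  have hSfin : S.Finite := (bext_finite u w).union (bext_finite u w.reverse)
  have himfin : (q '' S).Finite := hSfin.image q
  have hmem : ∀ x : A, x :: (w ++ [c]) ∈ Lang u → x :: (w ++ [c]) ∈ S :=
    fun x hx => Or.inl ⟨hx, x, c, rfl⟩
  have hTT : TT u w = (q '' S).ncard := rfl
  have hpair₀ : ({q (a₀ :: (w ++ [c])), q (b₀ :: (w ++ [c]))} : Set _) ⊆ q '' S := by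
    rintro x (rfl | rfl)
    · exact ⟨_, hmem a₀ ha₀, rfl⟩
    · exact ⟨_, hmem b₀ hb₀, rfl⟩
  have hlb : 2 ≤ TT u w := by
    rw [hTT, ← Set.ncard_pair (cls_ne hab₀ (c := c) (w := w))]
    exact Set.ncard_le_ncard hpair₀ himfin
  refine ⟨hlb, ?_, ?_⟩
  · -- forward direction
    intro hT
    refine ⟨a₀, b₀, hab₀, ?_, ?_⟩
    · rintro x (rfl | rfl)
      · exact hmem a₀ ha₀
      · exact hmem b₀ hb₀
    · have heq : ({q (a₀ :: (w ++ [c])), q (b₀ :: (w ++ [c]))} : Set _) = q '' S := by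
        apply Set.eq_of_subset_of_ncard_le hpair₀ _ himfin
        rw [← hTT, hT, Set.ncard_pair (cls_ne hab₀ (c := c) (w := w))]
      intro x hx
      have hx' : q x ∈ ({q (a₀ :: (w ++ [c])), q (b₀ :: (w ++ [c]))} : Set _) := by
        rw [heq]; exact ⟨x, hx, rfl⟩
      rcases hx' with h1 | h1 <;> rcases Quotient.exact h1 with h2 | h2
      · exact Or.inl h2
      · rw [rev_cons_eq] at h2
        exact Or.inr (Or.inr (Or.inl h2))
      · exact Or.inr (Or.inl h2)
      · rw [rev_cons_eq] at h2
        exact Or.inr (Or.inr (Or.inr h2))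
  · -- backward direction
    rintro ⟨a, b, hab, hpairS, hsub⟩
    have him : q '' S = {q (a :: (w ++ [c])), q (b :: (w ++ [c]))} := by
      apply Set.eq_of_subset_of_subset
      · rintro x ⟨y, hy, rfl⟩
        rcases hsub hy with h1 | h1 | h1 | h1
        · exact Or.inl (congrArg q h1)
        · exact Or.inr (congrArg q h1)
        · refine Or.inl ?_
          rw [h1, ← rev_cons_eq]
          exact cls_rev _
        · refine Or.inr ?_
          rw [h1, ← rev_cons_eq]
          exact cls_rev _
      · rintro x (rfl | rfl)
        · exact ⟨_, hpairS (by simp), rfl⟩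
        · exact ⟨_, hpairS (by simp), rfl⟩
    rw [hTT, him, Set.ncard_pair (cls_ne hab (c := c) (w := w))]

end ReflPaper
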